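/- (Lemma 3.2) Let (X, d, μ) be an upper doubling, geometrically doubling metric measure space, p ∈ [1,∞), and f ∈ L¹_loc(μ) with ∫_X f dμ = 0 when μ(X) < ∞. Assume the good-λ inequality: for some ν ∈ (0,1) and each ε > 0 there is δ > 0 such that for all ℓ > 0, μ({N(f) > (1+ε)ℓ, M♯(f) ≤ δℓ}) ≤ ν μ({N(f) > ℓ}). If sup_{0<ℓ<R} ℓ^p μ({N(f) > ℓ}) < ∞ for every R > 0, then sup_{ℓ>0} ℓ^p μ({N(f) > ℓ}) ≤ C sup_{ℓ>0} ℓ^p μ({M♯(f) > ℓ}). -/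

import Mathlib

open Metric MeasureTheory
open scoped ENNReal

/-- Tolsa-Hytönen coefficient `δ(B, S)` of two balls `B ⊆ S`. -/
noncomputable def delta {X : Type*} [MetricSpace X] [MeasurableSpace X]
    (μ : Measure X) (Λ : X → ℝ → ℝ) (cB : X) (rB : ℝ) (cS : X) (rS : ℝ) : ℝ :=
  (∫⁻ x in ball cS (2 * rS) \ ball cB rB,
      ENNReal.ofReal ((Λ cB (dist x cB))⁻¹) ∂μ).toReal

open scoped Classical in
/-- The exponent of the smallest `(6, β₆)`-doubling dilate `6^j B` of the ball `B(c, r)`. -/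
noncomputable def tilde6 {X : Type*} [MetricSpace X] [MeasurableSpace X]
    (μ : Measure X) (β₆ : ℝ) (c : X) (r : ℝ) : ℕ :=
  if h : ∃ j : ℕ, μ (ball c (6 ^ (j + 1) * r)) ≤ ENNReal.ofReal β₆ * μ (ball c (6 ^ j * r))
  then Nat.find h else 0

/-- The sharp maximal function `M♯(f)` on a non-homogeneous metric measure space. -/
noncomputable def msharp {X : Type*} [MetricSpace X] [MeasurableSpace X]
    (μ : Measure X) (Λ : X → ℝ → ℝ) (β₆ : ℝ) (f : X → ℝ) (x : X) : ℝ≥0∞ :=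
  (⨆ (c : X) (r : ℝ) (_ : 0 < r ∧ x ∈ ball c r),
    ENNReal.ofReal ((∫ y in ball c r,
        |f y - ⨍ z in ball c (6 ^ tilde6 μ β₆ c r * r), f z ∂μ| ∂μ) /
      (μ (ball c (5 * r))).toReal)) ⊔
  (⨆ (cB : X) (rB : ℝ) (cS : X) (rS : ℝ)
      (_ : 0 < rB ∧ 0 < rS ∧ x ∈ ball cB rB ∧ ball cB rB ⊆ ball cS rS ∧
        μ (ball cB (6 * rB)) ≤ ENNReal.ofReal β₆ * μ (ball cB rB) ∧
        μ (ball cS (6 * rS)) ≤ ENNReal.ofReal β₆ * μ (ball cS rS)),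
    ENNReal.ofReal (|(⨍ z in ball cB rB, f z ∂μ) - ⨍ z in ball cS rS, f z ∂μ| /
      (1 + delta μ Λ cB rB cS rS)))

/-- The doubling Hardy-Littlewood maximal function `N(f)`: supremum of averages of `|f|` over
`(6, β₆)`-doubling balls containing the point. -/
noncomputable def nmax {X : Type*} [MetricSpace X] [MeasurableSpace X]
    (μ : Measure X) (β₆ : ℝ) (f : X → ℝ) (x : X) : ℝ≥0∞ :=
  ⨆ (c : X) (r : ℝ)
    (_ : 0 < r ∧ x ∈ ball c r ∧ μ (ball c (6 * r)) ≤ ENNReal.ofReal β₆ * μ (ball c r)),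
    (∫⁻ y in ball c r, ENNReal.ofReal |f y| ∂μ) / μ (ball c r)

/-- (Lemma 3.2) If the good-λ inequality relating `N(f)` and `M♯(f)` holds and the weak-type
quantity for `N(f)` is finite at every finite level, then
`sup_{ℓ>0} ℓ^p μ({N f > ℓ}) ≤ C sup_{ℓ>0} ℓ^p μ({M♯ f > ℓ})`. -/
theorem weak_type_nmax_le_msharp {X : Type*} [MetricSpace X] [MeasurableSpace X]
    [BorelSpace X] (μ : Measure X) (Λ : X → ℝ → ℝ) (Cl β₆ : ℝ) (N₀ : ℕ)
    (hΛpos : ∀ (x : X) (r : ℝ), 0 < r → 0 < Λ x r)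
    (hΛmono : ∀ (x : X) (r s : ℝ), 0 < r → r ≤ s → Λ x r ≤ Λ x s)
    (hΛdom : ∀ (x : X) (r : ℝ), 0 < r → μ (ball x r) ≤ ENNReal.ofReal (Λ x r))
    (hΛdouble : ∀ (x : X) (r : ℝ), 0 < r → Λ x r ≤ Cl * Λ x (r / 2))
    (hgd : ∀ (x : X) (r : ℝ), ∃ s : Finset X,
      s.card ≤ N₀ ∧ ball x r ⊆ ⋃ y ∈ s, ball y (r / 2))
    (p : ℝ) (hp : 1 ≤ p) (f : X → ℝ) (hf : LocallyIntegrable f μ)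
    (hmean : μ Set.univ < ⊤ → ∫ x, f x ∂μ = 0)
    (hgl : ∃ ν ∈ Set.Ioo (0 : ℝ) 1, ∀ ε : ℝ, 0 < ε → ∃ δ : ℝ, 0 < δ ∧ ∀ ℓ : ℝ, 0 < ℓ →
      μ ({x | ENNReal.ofReal ((1 + ε) * ℓ) < nmax μ β₆ f x} ∩
          {x | msharp μ Λ β₆ f x ≤ ENNReal.ofReal (δ * ℓ)}) ≤
        ENNReal.ofReal ν * μ {x | ENNReal.ofReal ℓ < nmax μ β₆ f x})
    (hfin : ∀ R : ℝ, 0 < R →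
      (⨆ (ℓ : ℝ) (_ : ℓ ∈ Set.Ioo 0 R),
        ENNReal.ofReal (ℓ ^ p) * μ {x | ENNReal.ofReal ℓ < nmax μ β₆ f x}) < ⊤) :
    ∃ C : ℝ, 0 < C ∧
      (⨆ (ℓ : ℝ) (_ : 0 < ℓ),
          ENNReal.ofReal (ℓ ^ p) * μ {x | ENNReal.ofReal ℓ < nmax μ β₆ f x}) ≤
        ENNReal.ofReal C *
          ⨆ (ℓ : ℝ) (_ : 0 < ℓ),
            ENNReal.ofReal (ℓ ^ p) * μ {x | ENNReal.ofReal ℓ < msharp μ Λ β₆ f x} := by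
  classical
  obtain ⟨ν, ⟨hν0, hν1⟩, hgl⟩ := hgl
  have hp0 : 0 < p := lt_of_lt_of_le one_pos hp
  have hq1 : 1 < ν ^ (-p⁻¹) :=
    (Real.one_lt_rpow_iff_of_pos hν0).mpr
      (Or.inr ⟨hν1, neg_lt_zero.mpr (inv_pos.mpr hp0)⟩)
  set ε : ℝ := (ν ^ (-p⁻¹) - 1) / 2 with hεdef
  have hε : 0 < ε := by rw [hεdef]; linarith
  have h1ε : (0:ℝ) < 1 + ε := by linarith
  have h1εq : 1 + ε < ν ^ (-p⁻¹) := by rw [hεdef]; linarith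
  have hqp : (ν ^ (-p⁻¹)) ^ p = ν⁻¹ := by
    rw [← Real.rpow_mul hν0.le]
    have h : -p⁻¹ * p = -1 := by field_simp
    rw [h, Real.rpow_neg_one]
  have hpow : (1 + ε) ^ p < ν⁻¹ := by
    have h1 : (1 + ε) ^ p < (ν ^ (-p⁻¹)) ^ p :=
      Real.rpow_lt_rpow (by linarith) h1εq hp0
    rwa [hqp] at h1
  have hθ0 : 0 < (1 + ε) ^ p * ν :=
    mul_pos (Real.rpow_pos_of_pos h1ε p) hν0
  have hθ1 : (1 + ε) ^ p * ν < 1 := by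
    have h := mul_lt_mul_of_pos_right hpow hν0
    rwa [inv_mul_cancel₀ hν0.ne'] at h
  obtain ⟨δ, hδ0, hδ⟩ := hgl ε hε
  have hδp : 0 < δ ^ p := Real.rpow_pos_of_pos hδ0 p
  have hκ0 : 0 < (1 + ε) ^ p / δ ^ p :=
    div_pos (Real.rpow_pos_of_pos h1ε p) hδp
  set G : ℝ → ℝ≥0∞ := fun ℓ =>
    ENNReal.ofReal (ℓ ^ p) * μ {x | ENNReal.ofReal ℓ < nmax μ β₆ f x} with hGdef
  set T : ℝ≥0∞ := ⨆ (ℓ : ℝ) (_ : 0 < ℓ),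
    ENNReal.ofReal (ℓ ^ p) * μ {x | ENNReal.ofReal ℓ < msharp μ Λ β₆ f x} with hTdef
  rcases eq_top_or_lt_top T with hTtop | hTlt
  · refine ⟨1, one_pos, ?_⟩
    rw [hTtop, ENNReal.mul_top (by simp)]
    exact le_top
  have hTne : T ≠ ⊤ := hTlt.ne
  -- good-λ measure estimate
  have hmeas : ∀ ℓ : ℝ, 0 < ℓ →
      μ {x | ENNReal.ofReal ((1 + ε) * ℓ) < nmax μ β₆ f x} ≤
        ENNReal.ofReal ν * μ {x | ENNReal.ofReal ℓ < nmax μ β₆ f x} +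
        μ {x | ENNReal.ofReal (δ * ℓ) < msharp μ Λ β₆ f x} := by
    intro ℓ hℓ
    have hsub : {x | ENNReal.ofReal ((1 + ε) * ℓ) < nmax μ β₆ f x} ⊆
        ({x | ENNReal.ofReal ((1 + ε) * ℓ) < nmax μ β₆ f x} ∩
          {x | msharp μ Λ β₆ f x ≤ ENNReal.ofReal (δ * ℓ)}) ∪
        {x | ENNReal.ofReal (δ * ℓ) < msharp μ Λ β₆ f x} := by
      intro x hx
      by_cases h : msharp μ Λ β₆ f x ≤ ENNReal.ofReal (δ * ℓ)
      · exact Or.inl ⟨hx, h⟩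
      · exact Or.inr (not_le.mp h)
    calc μ {x | ENNReal.ofReal ((1 + ε) * ℓ) < nmax μ β₆ f x}
        ≤ μ (({x | ENNReal.ofReal ((1 + ε) * ℓ) < nmax μ β₆ f x} ∩
            {x | msharp μ Λ β₆ f x ≤ ENNReal.ofReal (δ * ℓ)}) ∪
          {x | ENNReal.ofReal (δ * ℓ) < msharp μ Λ β₆ f x}) := measure_mono hsub
      _ ≤ μ ({x | ENNReal.ofReal ((1 + ε) * ℓ) < nmax μ β₆ f x} ∩
            {x | msharp μ Λ β₆ f x ≤ ENNReal.ofReal (δ * ℓ)}) +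
          μ {x | ENNReal.ofReal (δ * ℓ) < msharp μ Λ β₆ f x} := measure_union_le _ _
      _ ≤ _ := add_le_add_left (hδ ℓ hℓ) _
  -- key iteration inequality
  have key : ∀ ℓ : ℝ, 0 < ℓ → G ((1 + ε) * ℓ) ≤
      ENNReal.ofReal ((1 + ε) ^ p * ν) * G ℓ +
      ENNReal.ofReal ((1 + ε) ^ p / δ ^ p) * T := by
    intro ℓ hℓ
    have e1 : ((1 + ε) * ℓ) ^ p = (1 + ε) ^ p * ℓ ^ p := Real.mul_rpow h1ε.le hℓ.le
    have hT2 : ENNReal.ofReal ((δ * ℓ) ^ p) *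
        μ {x | ENNReal.ofReal (δ * ℓ) < msharp μ Λ β₆ f x} ≤ T := by
      rw [hTdef]
      exact le_iSup₂_of_le (δ * ℓ) (mul_pos hδ0 hℓ) le_rfl
    have term1 : ENNReal.ofReal ((1 + ε) ^ p * ℓ ^ p) *
        (ENNReal.ofReal ν * μ {x | ENNReal.ofReal ℓ < nmax μ β₆ f x}) =
        ENNReal.ofReal ((1 + ε) ^ p * ν) * G ℓ := by
      rw [hGdef]
      simp only
      rw [← mul_assoc, ← ENNReal.ofReal_mul (by positivity), ← mul_assoc,
        ← ENNReal.ofReal_mul (by positivity)]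
      ring_nf
    have term2 : ENNReal.ofReal ((1 + ε) ^ p * ℓ ^ p) *
        μ {x | ENNReal.ofReal (δ * ℓ) < msharp μ Λ β₆ f x} ≤
        ENNReal.ofReal ((1 + ε) ^ p / δ ^ p) * T := by
      have e2 : (1 + ε) ^ p * ℓ ^ p = ((1 + ε) ^ p / δ ^ p) * (δ * ℓ) ^ p := by
        rw [Real.mul_rpow hδ0.le hℓ.le]
        field_simp
      rw [e2, ENNReal.ofReal_mul (by positivity), mul_assoc]
      exact mul_le_mul_right hT2 _
    calc G ((1 + ε) * ℓ)
        = ENNReal.ofReal ((1 + ε) ^ p * ℓ ^ p) *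
          μ {x | ENNReal.ofReal ((1 + ε) * ℓ) < nmax μ β₆ f x} := by
          rw [hGdef]; simp only; rw [e1]
      _ ≤ ENNReal.ofReal ((1 + ε) ^ p * ℓ ^ p) *
          (ENNReal.ofReal ν * μ {x | ENNReal.ofReal ℓ < nmax μ β₆ f x} +
            μ {x | ENNReal.ofReal (δ * ℓ) < msharp μ Λ β₆ f x}) :=
        mul_le_mul_right (hmeas ℓ hℓ) _
      _ = ENNReal.ofReal ((1 + ε) ^ p * ℓ ^ p) *
          (ENNReal.ofReal ν * μ {x | ENNReal.ofReal ℓ < nmax μ β₆ f x}) +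
          ENNReal.ofReal ((1 + ε) ^ p * ℓ ^ p) *
          μ {x | ENNReal.ofReal (δ * ℓ) < msharp μ Λ β₆ f x} := mul_add _ _ _
      _ ≤ _ := by rw [term1]; exact add_le_add_right term2 _
  -- absorption at each finite level R
  set C : ℝ := ((1 + ε) ^ p / δ ^ p) / (1 - (1 + ε) ^ p * ν) with hCdef
  have hC0 : 0 < C := by rw [hCdef]; exact div_pos hκ0 (by linarith)
  have habs : ∀ R : ℝ, 0 < R →
      (⨆ (ℓ : ℝ) (_ : ℓ ∈ Set.Ioo 0 R), G ℓ) ≤ ENNReal.ofReal C * T := by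
    intro R hR
    have hFfin : (⨆ (ℓ : ℝ) (_ : ℓ ∈ Set.Ioo 0 R), G ℓ) < ⊤ := hfin R hR
    set F : ℝ≥0∞ := ⨆ (ℓ : ℝ) (_ : ℓ ∈ Set.Ioo 0 R), G ℓ with hFdef
    have hFne : F ≠ ⊤ := hFfin.ne
    have hself : F ≤ ENNReal.ofReal ((1 + ε) ^ p * ν) * F +
        ENNReal.ofReal ((1 + ε) ^ p / δ ^ p) * T := by
      refine iSup₂_le fun ℓ hℓ => ?_
      have hm0 : 0 < ℓ / (1 + ε) := div_pos hℓ.1 h1ε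
      have hmR : ℓ / (1 + ε) < R := by
        have hle : ℓ / (1 + ε) ≤ ℓ := by
          rw [div_le_iff₀ h1ε]; nlinarith [hℓ.1]
        linarith [hℓ.2]
      have hℓeq : ℓ = (1 + ε) * (ℓ / (1 + ε)) := by field_simp
      have hGm : G (ℓ / (1 + ε)) ≤ F :=
        le_iSup₂_of_le (ℓ / (1 + ε)) ⟨hm0, hmR⟩ le_rfl
      calc G ℓ = G ((1 + ε) * (ℓ / (1 + ε))) := by rw [← hℓeq]
        _ ≤ ENNReal.ofReal ((1 + ε) ^ p * ν) * G (ℓ / (1 + ε)) +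
            ENNReal.ofReal ((1 + ε) ^ p / δ ^ p) * T := key _ hm0
        _ ≤ _ := add_le_add_left (mul_le_mul_right hGm _) _
    have hane : ENNReal.ofReal ((1 + ε) ^ p * ν) * F ≠ ⊤ :=
      (ENNReal.mul_lt_top ENNReal.ofReal_lt_top hFfin).ne
    have hbne : ENNReal.ofReal ((1 + ε) ^ p / δ ^ p) * T ≠ ⊤ :=
      (ENNReal.mul_lt_top ENNReal.ofReal_lt_top hTlt).ne
    have hreal : F.toReal ≤ ((1 + ε) ^ p * ν) * F.toReal +
        ((1 + ε) ^ p / δ ^ p) * T.toReal := by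
      have h := ENNReal.toReal_mono (by exact ENNReal.add_ne_top.mpr ⟨hane, hbne⟩) hself
      rwa [ENNReal.toReal_add hane hbne, ENNReal.toReal_mul, ENNReal.toReal_mul,
        ENNReal.toReal_ofReal hθ0.le, ENNReal.toReal_ofReal hκ0.le] at h
    have hfr : F.toReal ≤ C * T.toReal := by
      rw [hCdef, div_mul_eq_mul_div, le_div_iff₀ (by linarith)]
      linarith
    calc F = ENNReal.ofReal F.toReal := (ENNReal.ofReal_toReal hFne).symm
      _ ≤ ENNReal.ofReal (C * T.toReal) := ENNReal.ofReal_le_ofReal hfr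
      _ = ENNReal.ofReal C * ENNReal.ofReal T.toReal := ENNReal.ofReal_mul hC0.le
      _ = ENNReal.ofReal C * T := by rw [ENNReal.ofReal_toReal hTne]
  refine ⟨C, hC0, ?_⟩
  refine iSup₂_le fun ℓ hℓ => ?_
  have h1 : G ℓ ≤ ⨆ (m : ℝ) (_ : m ∈ Set.Ioo 0 (ℓ + 1)), G m :=
    le_iSup₂_of_le ℓ ⟨hℓ, by linarith⟩ le_rfl
  exact h1.trans (habs (ℓ + 1) (by linarith))
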